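/- Let $d \geq 1$ and for $k \in \mathbb{N}$ let $a_k \in M_{d_k}(\mathbb{C})$ with all $d_k \leq d$. Suppose $\lambda \in \mathbb{C}$ satisfies $\mathrm{dist}(\lambda, \bigcup_k \mathrm{sp}(a_k)) \geq r > 0$ and $\sup_k \|a_k\| \leq M$. Then $\|(a_k - \lambda)^{-1}\| \leq r^{-d} \sqrt{d} (d-1)! (M + |\lambda|)^{d-1}$ for all $k$. -/

import Mathlib

open scoped Matrix.Norms.L2Operator

section ResolventAuxiliary

open Matrix Polynomial

lemma my_eval_charpoly {n : ℕ} (b : Matrix (Fin n) (Fin n) ℂ) (t : ℂ) :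
    (Matrix.charpoly b).eval t = (Matrix.scalar (Fin n) t - b).det := by
  rw [Matrix.charpoly, eval_det, matPolyEquiv_charmatrix]
  simp

lemma root_mem_spectrum {n : ℕ} (b : Matrix (Fin n) (Fin n) ℂ) (z : ℂ)
    (hz : z ∈ (Matrix.charpoly b).roots) : z ∈ spectrum ℂ b := by
  rw [Polynomial.mem_roots'] at hz
  rw [spectrum.mem_iff]
  intro h
  rw [Matrix.isUnit_iff_isUnit_det] at h
  have : (Matrix.charpoly b).eval z = 0 := hz.2
  rw [my_eval_charpoly] at this
  have : (algebraMap ℂ (Matrix (Fin n) (Fin n) ℂ) z - b).det = 0 := this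
  rw [this] at h
  exact h.ne_zero rfl

lemma abs_det_lower {n : ℕ} (b : Matrix (Fin n) (Fin n) ℂ) (lam : ℂ) (r : ℝ) (hr : 0 ≤ r)
    (h : ∀ z ∈ spectrum ℂ b, r ≤ ‖lam - z‖) :
    r ^ n ≤ ‖(b - Matrix.scalar (Fin n) lam).det‖ := by
  have hdet : (b - Matrix.scalar (Fin n) lam).det
      = (-1) ^ n * (Matrix.charpoly b).eval lam := by
    rw [my_eval_charpoly, show b - Matrix.scalar (Fin n) lam
      = -(Matrix.scalar (Fin n) lam - b) from (neg_sub _ _).symm, Matrix.det_neg]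
    simp [Fintype.card_fin]
  rw [hdet, norm_mul]
  simp only [norm_pow, norm_neg, norm_one, one_pow, one_mul]
  have hsplit : Matrix.charpoly b = ((Matrix.charpoly b).roots.map (fun z => X - C z)).prod :=
    (Polynomial.Splits.eq_prod_roots_of_monic (IsAlgClosed.splits _)
      b.charpoly_monic)
  have hcard : Multiset.card (Matrix.charpoly b).roots = n := by
    have h1 : (Matrix.charpoly b).natDegree = n := by
      rw [Matrix.charpoly_natDegree_eq_dim, Fintype.card_fin]
    have h2 := Polynomial.Splits.natDegree_eq_card_roots
      (IsAlgClosed.splits b.charpoly)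
    rw [← h2]
    exact h1
  have heval : (Matrix.charpoly b).eval lam
      = ((Matrix.charpoly b).roots.map (fun z => lam - z)).prod := by
    conv_lhs => rw [hsplit]
    rw [Polynomial.eval_multiset_prod, Multiset.map_map]
    simp [Function.comp]
  rw [heval]
  have hspec : ∀ z ∈ (Matrix.charpoly b).roots, z ∈ spectrum ℂ b :=
    fun z hz => root_mem_spectrum b z hz
  obtain ⟨s, hs⟩ : ∃ s, (Matrix.charpoly b).roots = s := ⟨_, rfl⟩
  rw [hs] at hcard hspec ⊢
  have habs : ‖(s.map (fun z => lam - z)).prod‖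
      = ((s.map (fun z => ‖lam - z‖))).prod := by
    rw [show ‖(s.map (fun z => lam - z)).prod‖ = normHom (s.map (fun z => lam - z)).prod from rfl,
      map_multiset_prod, Multiset.map_map]
    rfl
  rw [habs, ← hcard]
  have hmem : ∀ t ∈ s.map (fun z => ‖lam - z‖), r ≤ t := by
    intro t ht
    obtain ⟨z, hz, rfl⟩ := Multiset.mem_map.mp ht
    exact h z (hspec z hz)
  calc r ^ Multiset.card s
      = r ^ Multiset.card (s.map (fun z => ‖lam - z‖)) := by rw [Multiset.card_map]
    _ ≤ (s.map (fun z => ‖lam - z‖)).prod := by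
        generalize s.map (fun z => ‖lam - z‖) = u at hmem
        induction u using Multiset.induction_on with
        | empty => simp
        | cons a u ih =>
            rw [Multiset.prod_cons, Multiset.card_cons, pow_succ, mul_comm]
            exact mul_le_mul (hmem a (Multiset.mem_cons_self a u))
              (ih (fun t ht => hmem t (Multiset.mem_cons_of_mem ht)))
              (pow_nonneg hr _) ((hr.trans (hmem a (Multiset.mem_cons_self a u))).trans (le_refl _))

open scoped ComplexOrder in
lemma norm_inv_le_aux {n : ℕ} (hn : 0 < n) (b : Matrix (Fin n) (Fin n) ℂ)
    (hdet : IsUnit b.det) :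
    ‖b⁻¹‖ ≤ ‖b‖ ^ (n - 1) / ‖b.det‖ := by
  haveI : Nonempty (Fin n) := ⟨⟨0, hn⟩⟩
  set G := bᴴ * b with hGdef
  have hG : G.IsHermitian := isHermitian_conjTranspose_mul_self b
  have hP : G.PosSemidef := posSemidef_conjTranspose_mul_self b
  set μ := hG.eigenvalues with hμdef
  have hμ0 : ∀ i, 0 ≤ μ i := fun i => hP.eigenvalues_nonneg i
  have habs : 0 < ‖b.det‖ := by
    simpa [norm_pos_iff] using hdet.ne_zero
  -- product of eigenvalues
  have hprod : ∏ i, μ i = ‖b.det‖ ^ 2 := by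
    have h1 : G.det = ∏ i, (μ i : ℂ) := hG.det_eq_prod_eigenvalues
    have h2 : G.det = (starRingEnd ℂ) b.det * b.det := by
      rw [hGdef, det_mul, det_conjTranspose]
      rfl
    apply Complex.ofReal_injective
    push_cast
    rw [← h1, h2, mul_comm, Complex.mul_conj, Complex.normSq_eq_norm_sq]
    push_cast
    ring
  -- eigenvalue upper bound
  have hμle : ∀ i, μ i ≤ ‖b‖ ^ 2 := by
    intro i
    have he := hG.mulVec_eigenvectorBasis i
    have hb : ‖(EuclideanSpace.equiv (Fin n) ℂ).symm
        (G *ᵥ (hG.eigenvectorBasis i).ofLp)‖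
        ≤ ‖G‖ * ‖hG.eigenvectorBasis i‖ := G.l2_opNorm_mulVec _
    rw [he] at hb
    have h1 : ((EuclideanSpace.equiv (Fin n) ℂ).symm
        (hG.eigenvalues i • (hG.eigenvectorBasis i).ofLp))
        = (μ i) • (hG.eigenvectorBasis i) := rfl
    rw [h1, norm_smul] at hb
    have hnorm : ‖hG.eigenvectorBasis i‖ = 1 := hG.eigenvectorBasis.orthonormal.1 i
    rw [hnorm, mul_one, mul_one] at hb
    have : ‖G‖ = ‖b‖ ^ 2 := by
      rw [hGdef, l2_opNorm_conjTranspose_mul_self, sq]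
    rw [this] at hb
    exact (le_abs_self _).trans (by simpa using hb)
  -- minimal eigenvalue
  obtain ⟨i0, -, hi0⟩ := Finset.exists_min_image Finset.univ μ ⟨⟨0, hn⟩, Finset.mem_univ _⟩
  have hμpos : 0 < μ i0 := by
    rcases (hμ0 i0).lt_or_eq with h | h
    · exact h
    · exfalso
      have : ∏ i, μ i = 0 := Finset.prod_eq_zero (Finset.mem_univ i0) h.symm
      rw [hprod] at this
      exact (pow_pos habs 2).ne' this
  have hNpos : 0 < ‖b‖ := by
    rw [norm_pos_iff]
    intro h0
    rw [h0, Matrix.det_zero] at hdet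
    exact hdet.ne_zero rfl
  -- lower bound on minimal eigenvalue
  have hlow : ‖b.det‖ ^ 2 ≤ μ i0 * (‖b‖ ^ 2) ^ (n - 1) := by
    rw [← hprod, ← Finset.mul_prod_erase Finset.univ μ (Finset.mem_univ i0)]
    refine mul_le_mul_of_nonneg_left ?_ (hμ0 i0)
    calc ∏ i ∈ Finset.univ.erase i0, μ i
        ≤ ∏ _i ∈ Finset.univ.erase i0, ‖b‖ ^ 2 :=
          Finset.prod_le_prod (fun i _ => hμ0 i) (fun i _ => hμle i)
      _ = (‖b‖ ^ 2) ^ (n - 1) := by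
          rw [Finset.prod_const, Finset.card_erase_of_mem (Finset.mem_univ i0),
            Finset.card_univ, Fintype.card_fin]
  -- PSD of G - min eigenvalue
  have hUmul : (hG.eigenvectorUnitary : Matrix (Fin n) (Fin n) ℂ)
      * star (hG.eigenvectorUnitary : Matrix (Fin n) (Fin n) ℂ) = 1 :=
    (Matrix.mem_unitaryGroup_iff).mp hG.eigenvectorUnitary.2
  have hdiagPSD : (Matrix.diagonal (fun i : Fin n => ((μ i : ℂ) - (μ i0 : ℂ)))).PosSemidef := by
    rw [Matrix.posSemidef_diagonal_iff]
    intro i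
    rw [← Complex.ofReal_sub]
    exact Complex.zero_le_real.mpr (sub_nonneg.mpr (hi0 i (Finset.mem_univ i)))
  have hconj := hdiagPSD.mul_mul_conjTranspose_same
    (hG.eigenvectorUnitary : Matrix (Fin n) (Fin n) ℂ)
  have hPexp : (hG.eigenvectorUnitary : Matrix (Fin n) (Fin n) ℂ)
      * (Matrix.diagonal fun i => ((μ i : ℂ) - (μ i0 : ℂ)))
      * (hG.eigenvectorUnitary : Matrix (Fin n) (Fin n) ℂ)ᴴ = G - (μ i0 : ℂ) • 1 := by
    have hsp := hG.spectral_theorem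
    rw [Unitary.conjStarAlgAut_apply] at hsp
    rw [← Matrix.star_eq_conjTranspose]
    have hdd : Matrix.diagonal (fun i : Fin n => ((μ i : ℂ) - (μ i0 : ℂ)))
        = Matrix.diagonal (RCLike.ofReal ∘ hG.eigenvalues) - (μ i0 : ℂ) • 1 := by
      ext i j
      rcases eq_or_ne i j with rfl | hij
      · simp [Matrix.one_apply, hμdef]
      · simp [hij, Matrix.one_apply_ne hij]
    rw [hdd, Matrix.mul_sub, Matrix.sub_mul, ← hsp]
    congr 1
    rw [Matrix.mul_smul, mul_one, Matrix.smul_mul, hUmul]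
  rw [hPexp] at hconj
  -- quadratic form inequality
  have hquad : ∀ x : Fin n → ℂ,
      μ i0 * ∑ j, Complex.normSq (x j) ≤ ∑ j, Complex.normSq ((b *ᵥ x) j) := by
    intro x
    have h0 := hconj.dotProduct_mulVec_nonneg x
    have hexp : star x ⬝ᵥ ((G - (μ i0 : ℂ) • 1) *ᵥ x)
        = Complex.ofReal (∑ j, Complex.normSq ((b *ᵥ x) j)
            - μ i0 * ∑ j, Complex.normSq (x j)) := by
      rw [Matrix.sub_mulVec, dotProduct_sub]
      have h1 : star x ⬝ᵥ (G *ᵥ x)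
          = ((∑ j, Complex.normSq ((b *ᵥ x) j) : ℝ) : ℂ) := by
        rw [hGdef, ← Matrix.mulVec_mulVec, Matrix.dotProduct_mulVec, ← Matrix.star_mulVec]
        rw [dotProduct]
        push_cast
        refine Finset.sum_congr rfl fun j _ => ?_
        rw [Pi.star_apply, Complex.star_def, mul_comm, Complex.mul_conj]
      have h2 : star x ⬝ᵥ (((μ i0 : ℂ) • 1) *ᵥ x)
          = (μ i0 : ℂ) * ((∑ j, Complex.normSq (x j) : ℝ) : ℂ) := by
        rw [Matrix.smul_mulVec, Matrix.one_mulVec, dotProduct_smul, smul_eq_mul]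
        congr 1
        rw [dotProduct]
        push_cast
        refine Finset.sum_congr rfl fun j _ => ?_
        rw [Pi.star_apply, Complex.star_def, mul_comm, Complex.mul_conj]
      rw [h1, h2]
      push_cast
      ring
    rw [hexp, Complex.zero_le_real] at h0
    linarith
  -- conclude via operator norm bound
  have hKnn : 0 ≤ ‖b‖ ^ (n - 1) / ‖b.det‖ :=
    div_nonneg (pow_nonneg (norm_nonneg b) _) habs.le
  rw [Matrix.l2_opNorm_def]
  refine ContinuousLinearMap.opNorm_le_bound _ hKnn fun y => ?_
  set x : Fin n → ℂ := b⁻¹ *ᵥ (WithLp.equiv 2 ((_ : Fin n) → ℂ)) y with hx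
  have hbx : b *ᵥ x = (WithLp.equiv 2 ((_ : Fin n) → ℂ)) y := by
    rw [hx, Matrix.mulVec_mulVec, Matrix.mul_nonsing_inv b hdet, Matrix.one_mulVec]
  have happ : ((Matrix.toEuclideanLin.trans LinearMap.toContinuousLinearMap) b⁻¹) y
      = (WithLp.equiv 2 ((_ : Fin n) → ℂ)).symm x := rfl
  rw [happ]
  have hSx0 : 0 ≤ ∑ j, Complex.normSq (x j) :=
    Finset.sum_nonneg fun j _ => Complex.normSq_nonneg _
  have hSy0 : 0 ≤ ∑ j, Complex.normSq (((WithLp.equiv 2 ((_ : Fin n) → ℂ)) y) j) :=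
    Finset.sum_nonneg fun j _ => Complex.normSq_nonneg _
  have hq := hquad x
  rw [hbx] at hq
  have hnx : ‖(WithLp.equiv 2 ((_ : Fin n) → ℂ)).symm x‖
      = Real.sqrt (∑ j, Complex.normSq (x j)) := by
    rw [EuclideanSpace.norm_eq]
    congr 1
    refine Finset.sum_congr rfl fun j _ => ?_
    rw [Complex.sq_norm]
    rfl
  have hny : ‖y‖ = Real.sqrt (∑ j, Complex.normSq (((WithLp.equiv 2 ((_ : Fin n) → ℂ)) y) j)) := by
    rw [EuclideanSpace.norm_eq]
    congr 1
    refine Finset.sum_congr rfl fun j _ => ?_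
    rw [Complex.sq_norm]
    rfl
  rw [hnx, hny]
  set K := ‖b‖ ^ (n - 1) / ‖b.det‖ with hKdef
  have hpow : (‖b‖ ^ 2) ^ (n - 1) = (‖b‖ ^ (n - 1)) ^ 2 := by
    rw [← pow_mul, ← pow_mul, Nat.mul_comm]
  have hK2 : 1 ≤ μ i0 * K ^ 2 := by
    rw [hKdef, div_pow, ← mul_div_assoc]
    rw [one_le_div (pow_pos habs 2)]
    rw [← hpow]
    exact hlow
  have h1 : ∑ j, Complex.normSq (x j)
      ≤ K ^ 2 * ∑ j, Complex.normSq (((WithLp.equiv 2 ((_ : Fin n) → ℂ)) y) j) := by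
    calc ∑ j, Complex.normSq (x j) = 1 * ∑ j, Complex.normSq (x j) := (one_mul _).symm
      _ ≤ (μ i0 * K ^ 2) * ∑ j, Complex.normSq (x j) :=
          mul_le_mul_of_nonneg_right hK2 hSx0
      _ = K ^ 2 * (μ i0 * ∑ j, Complex.normSq (x j)) := by ring
      _ ≤ K ^ 2 * ∑ j, Complex.normSq (((WithLp.equiv 2 ((_ : Fin n) → ℂ)) y) j) :=
          mul_le_mul_of_nonneg_left hq (sq_nonneg K)
  calc Real.sqrt (∑ j, Complex.normSq (x j))
      ≤ Real.sqrt (K ^ 2 * ∑ j, Complex.normSq (((WithLp.equiv 2 ((_ : Fin n) → ℂ)) y) j)) :=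
        Real.sqrt_le_sqrt h1
    _ = K * Real.sqrt (∑ j, Complex.normSq (((WithLp.equiv 2 ((_ : Fin n) → ℂ)) y) j)) := by
        rw [Real.sqrt_mul (sq_nonneg K), Real.sqrt_sq hKnn]

end ResolventAuxiliary

/-- Uniform bound on resolvents of matrices of uniformly bounded size: if `a k ∈ M_{d_k}(ℂ)` with
`d_k ≤ d`, `‖a k‖ ≤ M`, and `λ` is at distance at least `r > 0` from every spectrum `sp(a k)`,
then `‖(a k - λ)⁻¹‖ ≤ r⁻ᵈ √d (d-1)! (M + |λ|)^{d-1}` for all `k` (operator norm). -/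
theorem resolvent_uniform_bound
    (d : ℕ) (hd : 1 ≤ d) (dk : ℕ → ℕ) (hdk : ∀ k, dk k ≤ d)
    (a : ∀ k, Matrix (Fin (dk k)) (Fin (dk k)) ℂ)
    (r M : ℝ) (lam : ℂ) (hr : 0 < r)
    (hdist : ∀ k, ∀ z ∈ spectrum ℂ (a k), r ≤ ‖lam - z‖)
    (hM : ∀ k, ‖a k‖ ≤ M) :
    ∀ k, ‖Ring.inverse (a k - algebraMap ℂ _ lam)‖ ≤
      r⁻¹ ^ d * Real.sqrt d * (Nat.factorial (d - 1)) * (M + ‖lam‖) ^ (d - 1) := by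
  intro k
  set n := dk k with hn
  set E := M + ‖lam‖ with hE
  have hM0 : 0 ≤ M := (norm_nonneg (a k)).trans (hM k)
  have hE0 : 0 ≤ E := by positivity
  have hsd : (1:ℝ) ≤ Real.sqrt d := Real.one_le_sqrt.mpr (by exact_mod_cast hd)
  have hfac : (1:ℝ) ≤ (Nat.factorial (d-1) : ℝ) := Nat.one_le_cast.mpr (Nat.factorial_pos _)
  rcases Nat.eq_zero_or_pos n with h0 | hpos
  · -- trivial case of 0×0 matrices
    have : IsEmpty (Fin n) := by rw [h0]; exact Fin.isEmpty'
    have hz : Ring.inverse (a k - algebraMap ℂ _ lam) = 0 := Subsingleton.elim _ _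
    rw [hz, norm_zero]
    positivity
  · haveI : Nonempty (Fin n) := ⟨⟨0, hpos⟩⟩
    set b := a k - algebraMap ℂ (Matrix (Fin n) (Fin n) ℂ) lam with hb
    -- invertibility
    have hnotmem : lam ∉ spectrum ℂ (a k) := fun hmem => by
      have := hdist k lam hmem
      simp at this
      linarith
    have hunit : IsUnit b.det := by
      rw [← Matrix.isUnit_iff_isUnit_det]
      rw [spectrum.mem_iff, not_not] at hnotmem
      rw [hb, ← IsUnit.neg_iff, neg_sub]
      exact hnotmem
    -- norm bound on b
    have hone : ‖(1 : Matrix (Fin n) (Fin n) ℂ)‖ = 1 := CStarRing.norm_one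
    haveI : NormOneClass (Matrix (Fin n) (Fin n) ℂ) := ⟨hone⟩
    have hbE : ‖b‖ ≤ E := by
      rw [hb]
      refine (norm_sub_le _ _).trans ?_
      rw [hE]
      have : ‖algebraMap ℂ (Matrix (Fin n) (Fin n) ℂ) lam‖ = ‖lam‖ := by
        rw [norm_algebraMap']
      rw [this]
      exact add_le_add_left (hM k) _
    -- r ≤ E using nonempty spectrum
    have hrE : r ≤ E := by
      obtain ⟨z, hz⟩ := spectrum.nonempty (a k)
      have h1 : r ≤ ‖lam - z‖ := hdist k z hz
      have h2 : ‖z‖ ≤ ‖a k‖ := spectrum.norm_le_norm_of_mem hz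
      have h3 : ‖lam - z‖ ≤ ‖lam‖ + ‖z‖ := by
        simpa [sub_eq_add_neg] using norm_add_le lam (-z)
      rw [hE]
      linarith [hM k]
    -- determinant lower bound
    have hdetlow : r ^ n ≤ ‖b.det‖ := by
      have := abs_det_lower (a k) lam r hr.le (hdist k)
      convert this using 3
      rw [hb]; rfl
    -- main bound
    have hmain : ‖b⁻¹‖ ≤ ‖b‖ ^ (n - 1) / ‖b.det‖ := norm_inv_le_aux hpos b hunit
    rw [← Matrix.nonsing_inv_eq_ringInverse]
    refine hmain.trans ?_
    have habs : 0 < ‖b.det‖ := lt_of_lt_of_le (pow_pos hr n) hdetlow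
    have step1 : ‖b‖ ^ (n - 1) / ‖b.det‖ ≤ E ^ (n - 1) / r ^ n :=
      div_le_div₀ (pow_nonneg hE0 _) (pow_le_pow_left₀ (norm_nonneg b) hbE _)
        (pow_pos hr n) hdetlow
    refine step1.trans ?_
    have hnd : n ≤ d := hdk k
    have hpos' : 1 ≤ n := hpos
    have step2 : E ^ (n - 1) / r ^ n ≤ E ^ (d - 1) / r ^ d := by
      rw [div_le_div_iff₀ (pow_pos hr n) (pow_pos hr d)]
      have e1 : E ^ (d - 1) = E ^ (n - 1) * E ^ (d - n) := by
        rw [← pow_add]; congr 1; omega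
      have e2 : r ^ d = r ^ n * r ^ (d - n) := by
        rw [← pow_add]; congr 1; omega
      rw [e1, e2]
      calc E ^ (n-1) * (r ^ n * r ^ (d - n))
          = (E ^ (n-1) * r ^ n) * r ^ (d - n) := by ring
        _ ≤ (E ^ (n-1) * r ^ n) * E ^ (d - n) := by
            refine mul_le_mul_of_nonneg_left (pow_le_pow_left₀ hr.le hrE _) ?_
            positivity
        _ = E ^ (n-1) * E ^ (d-n) * r ^ n := by ring
    refine step2.trans ?_
    rw [div_eq_mul_inv, ← inv_pow, mul_comm]
    calc r⁻¹ ^ d * E ^ (d-1)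
        ≤ (r⁻¹ ^ d * E ^ (d-1)) * (Real.sqrt d * (Nat.factorial (d-1) : ℝ)) := by
          refine le_mul_of_one_le_right (by positivity) ?_
          nlinarith
      _ = r⁻¹ ^ d * Real.sqrt d * (Nat.factorial (d-1) : ℝ) * E ^ (d-1) := by ring
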